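/- Let (L, R) be a cartesian factorization system with enough L-injectives on a category C, let C_R be the full subcategory of L-injective objects, let R̂ : C ⥤ C_R be a left adjoint of the inclusion C_R ↪ C (injective replacement), and let η denote the unit of the adjunction (each η_X : X ⟶ R̂(X) lies in L). Then a morphism f : X ⟶ Y of C lies in the class R if and only if the naturality square η_Y ∘ f = R̂(f) ∘ η_X is a pullback square in C. -/

import Mathlib

open CategoryTheory Limits

universe v u v' u'

/-- An orthogonal factorization system `(L, R)` on a category `C`. -/
structure IsOFS {C : Type u} [Category.{v} C] (L R : MorphismProperty C) : Prop where
  iso_left : ∀ {X Y : C} (f : X ⟶ Y), IsIso f → L f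
  iso_right : ∀ {X Y : C} (f : X ⟶ Y), IsIso f → R f
  comp_left : ∀ {X Y Z : C} (f : X ⟶ Y) (g : Y ⟶ Z), L f → L g → L (f ≫ g)
  comp_right : ∀ {X Y Z : C} (f : X ⟶ Y) (g : Y ⟶ Z), R f → R g → R (f ≫ g)
  factor : ∀ {X Y : C} (f : X ⟶ Y), ∃ (Z : C) (e : X ⟶ Z) (m : Z ⟶ Y), L e ∧ R m ∧ e ≫ m = f
  lift : ∀ {A B X Y : C} (e : A ⟶ B) (m : X ⟶ Y) (u : A ⟶ X) (v : B ⟶ Y),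
    L e → R m → u ≫ m = e ≫ v → ∃! d : B ⟶ X, e ≫ d = u ∧ d ≫ m = v

/-- A right stable orthogonal factorization system: pullbacks of morphisms in `L`
along morphisms in `R` exist and lie in `L`. -/
structure IsRightStableOFS {C : Type u} [Category.{v} C] (L R : MorphismProperty C)
    extends IsOFS L R : Prop where
  right_stable : ∀ {A B D : C} (g : B ⟶ D) (m : A ⟶ D), L g → R m →
    ∃ (P : C) (pfst : P ⟶ A) (psnd : P ⟶ B), L pfst ∧ IsPullback pfst psnd m g

/-- A cartesian factorization system: an OFS where `L` satisfies two-out-of-three and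
pullbacks of morphisms in `L` along morphisms in `R` exist and lie in `L`. -/
structure IsCartesianFS {C : Type u} [Category.{v} C] (L R : MorphismProperty C)
    extends IsOFS L R : Prop where
  left_two_of_three : ∀ {X Y Z : C} (f : X ⟶ Y) (g : Y ⟶ Z), L g → L (f ≫ g) → L f
  right_stable : ∀ {A B D : C} (g : B ⟶ D) (m : A ⟶ D), L g → R m →
    ∃ (P : C) (pfst : P ⟶ A) (psnd : P ⟶ B), L pfst ∧ IsPullback pfst psnd m g

/-- An object `X` is `L`-injective if every extension problem along a morphism of `L`
has a unique solution. -/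
def LInjective {C : Type u} [Category.{v} C] (L : MorphismProperty C) (X : C) : Prop :=
  ∀ {A B : C} (e : A ⟶ B), L e → ∀ g : A ⟶ X, ∃! h : B ⟶ X, e ≫ h = g

/-- A morphism of `E` is `p`-vertical if its image under `p` is an isomorphism. -/
def Vert {E : Type u} {B : Type u'} [Category.{v} E] [Category.{v'} B] (p : E ⥤ B) :
    MorphismProperty E :=
  fun _ _ e => IsIso (p.map e)

/-- A morphism of `E` is `p`-cartesian (strongly cartesian). -/
def PCart {E : Type u} {B : Type u'} [Category.{v} E] [Category.{v'} B] (p : E ⥤ B) :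
    MorphismProperty E :=
  fun Z Y m => ∀ ⦃W : E⦄ (h : W ⟶ Y) (g : p.obj W ⟶ p.obj Z),
    g ≫ p.map m = p.map h → ∃! k : W ⟶ Z, p.map k = g ∧ k ≫ m = h

/-- `p` is a Grothendieck fibration: every morphism of `B` into the image of an object
of `E` has a `p`-cartesian lift. -/
def IsGrothFib {E : Type u} {B : Type u'} [Category.{v} E] [Category.{v'} B] (p : E ⥤ B) :
    Prop :=
  ∀ (Y : E) (b : B) (f : b ⟶ p.obj Y),
    ∃ (Z : E) (m : Z ⟶ Y) (hZ : p.obj Z = b), PCart p m ∧ p.map m = eqToHom hZ ≫ f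

section Aux

variable {C : Type u} [Category.{v} C] {L R : MorphismProperty C}

/-- A morphism with the unique right lifting property against `L` lies in `R`. -/
lemma R_of_rlp (h : IsOFS L R) {A B : C} {m : A ⟶ B}
    (hm : ∀ {P Q : C} (e : P ⟶ Q), L e → ∀ (u : P ⟶ A) (v : Q ⟶ B), u ≫ m = e ≫ v →
      ∃! d : Q ⟶ A, e ≫ d = u ∧ d ≫ m = v) : R m := by
  obtain ⟨Z, e, r, he, hr, hfac⟩ := h.factor m
  obtain ⟨d, ⟨hd1, hd2⟩, -⟩ := hm e he (𝟙 A) r (by simp [hfac])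
  obtain ⟨k, -, huniq⟩ := h.lift e r e r he hr rfl
  have h1 : d ≫ e = k := huniq _ ⟨by rw [← Category.assoc, hd1, Category.id_comp],
    by rw [Category.assoc, hfac, hd2]⟩
  have h2 : 𝟙 Z = k := huniq _ ⟨by simp, by simp⟩
  have : IsIso e := ⟨d, hd1, by rw [h1, ← h2]⟩
  rw [← hfac]
  exact h.comp_right e r (h.iso_right e this) hr

/-- A morphism between `L`-injective objects lies in `R`. -/
lemma R_of_inj (h : IsOFS L R) {A B : C} (hA : LInjective L A) (hB : LInjective L B)
    (m : A ⟶ B) : R m := by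
  apply R_of_rlp h
  intro P Q e he u v hc
  obtain ⟨d, hd, hdu⟩ := hA e he u
  refine ⟨d, ⟨hd, ?_⟩, fun d' hd' => hdu d' hd'.1⟩
  obtain ⟨w, -, hwu⟩ := hB e he (u ≫ m)
  have h1 := hwu (d ≫ m) (by dsimp only []; rw [← Category.assoc, hd])
  have h2 := hwu v hc.symm
  rw [h1, h2]

/-- `R` is closed under left cancellation. -/
lemma R_cancel (h : IsOFS L R) {A B D : C} {g : A ⟶ B} {m : B ⟶ D}
    (hm : R m) (hgm : R (g ≫ m)) : R g := by
  apply R_of_rlp h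
  intro P Q e he u v hc
  obtain ⟨d, ⟨hd1, hd2⟩, hdu⟩ := h.lift e (g ≫ m) u (v ≫ m) he hgm
    (by rw [← Category.assoc, hc, Category.assoc])
  obtain ⟨w, -, hwu⟩ := h.lift e m (u ≫ g) (v ≫ m) he hm
    (by rw [← Category.assoc, hc, Category.assoc])
  have h1 : d ≫ g = w := hwu _ ⟨by rw [← Category.assoc, hd1],
    by rw [Category.assoc, hd2]⟩
  have h2 : v = w := hwu _ ⟨hc.symm, rfl⟩
  exact ⟨d, ⟨hd1, h1.trans h2.symm⟩, fun d' hd' => hdu d' ⟨hd'.1, by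
    rw [← Category.assoc, hd'.2]⟩⟩

/-- A morphism in both `L` and `R` is an isomorphism. -/
lemma iso_of_LR (h : IsOFS L R) {A B : C} {u : A ⟶ B} (hL : L u) (hR : R u) : IsIso u := by
  obtain ⟨d, ⟨hd1, hd2⟩, -⟩ := h.lift u u (𝟙 A) (𝟙 B) hL hR (by simp)
  exact ⟨d, hd1, hd2⟩

end Aux

/-- For a cartesian factorization system with enough `L`-injectives and injective replacement
left adjoint `Rhat` with unit in `L`, a morphism lies in `R` iff its naturality square for
the unit is a pullback. -/
theorem stmt7 {C : Type u} [Category.{v} C] {L R : MorphismProperty C}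
    (hLR : IsCartesianFS L R)
    (henough : ∀ X : C, ∃ (Y : C) (e : X ⟶ Y), L e ∧ LInjective L Y)
    (Rhat : C ⥤ ObjectProperty.FullSubcategory (LInjective L))
    (adj : Rhat ⊣ ObjectProperty.ι (LInjective L))
    (hunit : ∀ X : C, L (adj.unit.app X))
    {X Y : C} (f : X ⟶ Y) :
    R f ↔ IsPullback f (adj.unit.app X) (adj.unit.app Y)
      ((ObjectProperty.ι (LInjective L)).map (Rhat.map f)) := by
  set Rf := (ObjectProperty.ι (LInjective L)).map (Rhat.map f) with hRfdef
  have hnat : f ≫ adj.unit.app Y = adj.unit.app X ≫ Rf := by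
    simpa [hRfdef] using adj.unit.naturality f
  have hRf : R Rf := R_of_inj hLR.toIsOFS (Rhat.obj X).2 (Rhat.obj Y).2 _
  constructor
  · intro hf
    obtain ⟨P, pfst, psnd, hpfst, hPB⟩ :=
      hLR.right_stable (adj.unit.app Y) Rf (hunit Y) hRf
    let u := hPB.lift (adj.unit.app X) f hnat.symm
    have hu1 : u ≫ pfst = adj.unit.app X := hPB.lift_fst _ _ _
    have hu2 : u ≫ psnd = f := hPB.lift_snd _ _ _
    have hLu : L u := hLR.left_two_of_three u pfst hpfst (by rw [hu1]; exact hunit X)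
    have hRpsnd : R psnd := by
      apply R_of_rlp hLR.toIsOFS
      intro P' Q' e he a b hc
      obtain ⟨w, ⟨hw1, hw2⟩, hwu⟩ := hLR.lift e Rf (a ≫ pfst) (b ≫ adj.unit.app Y) he hRf
        (by rw [Category.assoc, hPB.w, ← Category.assoc, hc, Category.assoc])
      let k := hPB.lift w b hw2
      have hk1 : k ≫ pfst = w := hPB.lift_fst _ _ _
      have hk2 : k ≫ psnd = b := hPB.lift_snd _ _ _
      have hek : e ≫ k = a := hPB.hom_ext
        (by rw [Category.assoc, hk1, hw1]) (by rw [Category.assoc, hk2, hc])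
      refine ⟨k, ⟨hek, hk2⟩, fun k' hk' => ?_⟩
      have : k' ≫ pfst = w := hwu _ ⟨by rw [← Category.assoc, hk'.1],
        by rw [Category.assoc, hPB.w, ← Category.assoc, hk'.2]⟩
      exact hPB.hom_ext (by rw [this, hk1]) (by rw [hk'.2, hk2])
    have hRu : R u := R_cancel hLR.toIsOFS hRpsnd (by rw [hu2]; exact hf)
    have : IsIso u := iso_of_LR hLR.toIsOFS hLu hRu
    exact hPB.flip.of_iso (asIso u).symm (Iso.refl _) (Iso.refl _) (Iso.refl _)
      (by simp [← hu2]) (by simp [← hu1]) (by simp) (by simp)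
  · intro hpb
    apply R_of_rlp hLR.toIsOFS
    intro P' Q' e he u v hc
    obtain ⟨w, ⟨hw1, hw2⟩, hwu⟩ := hLR.lift e Rf (u ≫ adj.unit.app X)
      (v ≫ adj.unit.app Y) he hRf
      (by rw [Category.assoc, ← hnat, ← Category.assoc, hc, Category.assoc])
    let k := hpb.lift v w hw2.symm
    have hk1 : k ≫ f = v := hpb.lift_fst _ _ _
    have hk2 : k ≫ adj.unit.app X = w := hpb.lift_snd _ _ _
    have hek : e ≫ k = u := hpb.hom_ext
      (by rw [Category.assoc, hk1, hc]) (by rw [Category.assoc, hk2, hw1])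
    refine ⟨k, ⟨hek, hk1⟩, fun k' hk' => ?_⟩
    have : k' ≫ adj.unit.app X = w := hwu _ ⟨by rw [← Category.assoc, hk'.1],
      by rw [Category.assoc, ← hnat, ← Category.assoc, hk'.2]⟩
    exact hpb.hom_ext (by rw [hk'.2, hk1]) (by rw [this, hk2])
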